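/- arXiv:1108.6101 — 3 statements merged into one kernel-verified Lean document; each statement's English description precedes it below -/
import Mathlib

section
/- Let (g1, g2) be a matched pair of Lie algebras, i.e. there are linear actions α: g2 ⊗ g1 → g2 (written ζ ◁ X) and β: g2 ⊗ g1 → g1 (written ζ ▷ X) satisfying the four matched-pair compatibility identities. Then the vector space g1 ⊕ g2 with bracket [X ⊕ ζ, Z ⊕ ξ] = ([X,Z] + ζ ▷ Z − ξ ▷ X) ⊕ ([ζ,ξ] + ζ ◁ Z − ξ ◁ X) is a Lie algebra. -/
/-!
STATEMENT 0: Given a matched pair of Lie algebras `(g₁, g₂)`, i.e. bilinear actions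
`◁ : g₂ × g₁ → g₂` and `▷ : g₂ × g₁ → g₁` satisfying the four matched-pair identities,
the vector space `g₁ ⊕ g₂` with the double crossed sum bracket is a Lie algebra
(the bracket is alternating and satisfies the Jacobi/Leibniz identity; it is bilinear
by construction since it is assembled from linear maps).
-/

open LinearMap

theorem double_crossed_sum_is_lie_algebra
    {k : Type} [Field k]
    {g₁ g₂ : Type} [LieRing g₁] [LieAlgebra k g₁] [LieRing g₂] [LieAlgebra k g₂]
    -- the two actions, as bilinear maps
    (tl : g₂ →ₗ[k] g₁ →ₗ[k] g₂)   -- `tl ζ X = ζ ◁ X`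
    (tr : g₂ →ₗ[k] g₁ →ₗ[k] g₁)   -- `tr ζ X = ζ ▷ X`
    -- the four matched pair compatibility identities
    (h1 : ∀ (ζ ξ : g₂) (X : g₁),
      tr ⁅ζ, ξ⁆ X = tr ζ (tr ξ X) - tr ξ (tr ζ X))
    (h2 : ∀ (ζ : g₂) (X Y : g₁),
      tl ζ ⁅X, Y⁆ = tl (tl ζ X) Y - tl (tl ζ Y) X)
    (h3 : ∀ (ζ : g₂) (X Y : g₁),
      tr ζ ⁅X, Y⁆ = ⁅tr ζ X, Y⁆ + ⁅X, tr ζ Y⁆ + tr (tl ζ X) Y - tr (tl ζ Y) X)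
    (h4 : ∀ (ζ ξ : g₂) (X : g₁),
      tl ⁅ζ, ξ⁆ X = ⁅tl ζ X, ξ⁆ + ⁅ζ, tl ξ X⁆ + tl ζ (tr ξ X) - tl ξ (tr ζ X))
    -- the double crossed sum bracket on `g₁ ⊕ g₂`
    (br : (g₁ × g₂) → (g₁ × g₂) → (g₁ × g₂))
    (hbr : ∀ (a b : g₁ × g₂),
      br a b = (⁅a.1, b.1⁆ + tr a.2 b.1 - tr b.2 a.1,
                ⁅a.2, b.2⁆ + tl a.2 b.1 - tl b.2 a.1)) :
    -- `br` is alternating and satisfies the (Leibniz form of the) Jacobi identity,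
    -- i.e. `g₁ ⊕ g₂` with this bracket is a Lie algebra
    (∀ a : g₁ × g₂, br a a = 0) ∧
    (∀ a b c : g₁ × g₂, br a (br b c) = br (br a b) c + br b (br a c)) := by
  have key1 : ∀ (x y : g₁) (ζ : g₂), ⁅x, (tr ζ) y⁆ = -⁅(tr ζ) y, x⁆ :=
    fun x y ζ => (lie_skew _ _).symm
  have key2 : ∀ (x : g₁) (ζ ξ : g₂), ⁅(tl ζ) x, ξ⁆ = -⁅ξ, (tl ζ) x⁆ :=
    fun x ζ ξ => (lie_skew _ _).symm
  constructor
  · intro a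
    simp [hbr, Prod.ext_iff]
  · intro a b c
    simp only [hbr, Prod.ext_iff, Prod.fst_add, Prod.snd_add]
    constructor <;>
    · simp only [h1, h2, h3, h4, map_add, map_sub, map_neg, LinearMap.add_apply, LinearMap.sub_apply, LinearMap.neg_apply,
        lie_add, add_lie, lie_sub, sub_lie, lie_neg, neg_lie, lie_lie, key1, key2]
      abel
end

section
/- Let g be a Lie algebra, M a vector space, and ∇: M → g ⊗ M a linear map (a left g-comodule structure) satisfying the coassociativity condition m[−2] ∧ m[−1] ⊗ m[0] = 0 in (g ∧ g) ⊗ M, where m[−2] ⊗ m[−1] ⊗ m[0] denotes (id ⊗ ∇)∘∇(m). Then such comodule structures on M are in bijective correspondence with module structures over the symmetric algebra S(g*) on M that are 'nilpotent' in the appropriate sense; in particular for a finite-dimensional g with basis X1,…,XN and dual basis θ1,…,θN, the Koszul map m ↦ Σ_i X_i ⊗ m·θ^i defines a left g-comodule structure on M = S(g*). -/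
/-!
STATEMENT 2: Left comodule structures over a Lie algebra `g` (linear maps
`∇ : M → g ⊗ M` whose antisymmetrized iteration vanishes) are in bijective
correspondence with module structures over the symmetric algebra `S(g*)` on `M`
(equivalently, commuting families of operators depending linearly on `g*`); and
for a finite-dimensional `g` with basis `Xᵢ` and dual basis `θⁱ`, the Koszul map
`m ↦ Σᵢ Xᵢ ⊗ m·θⁱ` defines a left `g`-comodule structure on `M = S(g*)`
(realized as the polynomial algebra on the dual basis).
-/

open TensorProduct LinearMap

noncomputable section

/-- Swap the first two legs of `g ⊗ (g ⊗ M)`. -/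
def swap12 (k g M : Type) [Field k] [AddCommGroup g] [Module k g]
    [AddCommGroup M] [Module k M] :
    g ⊗[k] (g ⊗[k] M) →ₗ[k] g ⊗[k] (g ⊗[k] M) :=
  (TensorProduct.assoc k g g M).toLinearMap ∘ₗ
    (LinearMap.rTensor M (TensorProduct.comm k g g).toLinearMap) ∘ₗ
      (TensorProduct.assoc k g g M).symm.toLinearMap

/-- `cm` is a left comodule structure over the Lie algebra `g` :
the antisymmetrization `m₍₋₂₎ ∧ m₍₋₁₎ ⊗ m₍₀₎` of the iterated coaction vanishes
(over a field of characteristic zero this is equivalent to symmetry of the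
iterated coaction). -/
def IsLieComodule {k g M : Type} [Field k] [AddCommGroup g] [Module k g]
    [AddCommGroup M] [Module k M] (cm : M →ₗ[k] g ⊗[k] M) : Prop :=
  (swap12 k g M) ∘ₗ (LinearMap.lTensor g cm) ∘ₗ cm = (LinearMap.lTensor g cm) ∘ₗ cm

section Aux

variable {k g M : Type} [Field k] [AddCommGroup g] [Module k g]
  [AddCommGroup M] [Module k M]

/-- Contraction of the first tensor leg against a dual vector. -/
def ctr (θ : Module.Dual k g) : g ⊗[k] M →ₗ[k] M :=
  TensorProduct.lift ((LinearMap.lsmul k M).comp θ)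

@[simp] lemma ctr_tmul (θ : Module.Dual k g) (x : g) (m : M) :
    ctr θ (x ⊗ₜ[k] m) = θ x • m := rfl

lemma ctr_add (θ η : Module.Dual k g) (t : g ⊗[k] M) :
    ctr (θ + η) t = ctr θ t + ctr η t := by
  induction t using TensorProduct.induction_on with
  | zero => simp
  | tmul x m => simp [add_smul]
  | add a b ha hb => simp [ha, hb, add_add_add_comm]

lemma ctr_smul (c : k) (θ : Module.Dual k g) (t : g ⊗[k] M) :
    ctr (c • θ) t = c • ctr θ t := by
  induction t using TensorProduct.induction_on with
  | zero => simp
  | tmul x m => simp [mul_smul]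
  | add a b ha hb => simp [ha, hb]

lemma swap12_tmul (x y : g) (m : M) :
    swap12 k g M (x ⊗ₜ[k] (y ⊗ₜ[k] m)) = y ⊗ₜ[k] (x ⊗ₜ[k] m) := by
  simp [swap12]

/-- Expansion of a tensor against a basis of the first factor. -/
lemma expand_tensor {ι : Type} [Fintype ι] (B : Module.Basis ι k g) (t : g ⊗[k] M) :
    ∑ i : ι, B i ⊗ₜ[k] ctr (B.coord i) t = t := by
  induction t using TensorProduct.induction_on with
  | zero => simp
  | tmul x m =>
      have h1 : ∀ i : ι, B i ⊗ₜ[k] (B.coord i x • m) = (B.coord i x • B i) ⊗ₜ[k] m :=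
        fun i => (TensorProduct.smul_tmul _ _ _).symm
      simp only [ctr_tmul, h1, ← TensorProduct.sum_tmul]
      congr 1
      simpa [Module.Basis.coord_apply] using B.sum_repr x
  | add a b ha hb =>
      simp only [map_add, TensorProduct.tmul_add, Finset.sum_add_distrib, ha, hb]

/-- The operators attached to a coaction map. -/
def rho (cm : M →ₗ[k] g ⊗[k] M) : Module.Dual k g →ₗ[k] Module.End k M where
  toFun θ := ctr θ ∘ₗ cm
  map_add' θ η := by ext m; exact ctr_add θ η (cm m)
  map_smul' c θ := by ext m; exact ctr_smul c θ (cm m)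

@[simp] lemma rho_apply (cm : M →ₗ[k] g ⊗[k] M) (θ : Module.Dual k g) (m : M) :
    rho cm θ m = ctr θ (cm m) := rfl

/-- The coaction attached to a family of operators. -/
def coactOf {ι : Type} [Fintype ι] (B : Module.Basis ι k g)
    (ρ : Module.Dual k g →ₗ[k] Module.End k M) : M →ₗ[k] g ⊗[k] M :=
  ∑ i : ι, (TensorProduct.mk k g M (B i)) ∘ₗ (ρ (B.coord i))

lemma coactOf_apply {ι : Type} [Fintype ι] (B : Module.Basis ι k g)
    (ρ : Module.Dual k g →ₗ[k] Module.End k M) (m : M) :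
    coactOf B ρ m = ∑ i : ι, B i ⊗ₜ[k] (ρ (B.coord i) m) := by
  simp [coactOf]

/-- Any coaction built from a commuting family of operators is a Lie comodule. -/
lemma isLieComodule_sum {ι : Type} [Fintype ι] (B : Module.Basis ι k g)
    (f : ι → Module.End k M) (hc : ∀ i j, Commute (f i) (f j)) :
    IsLieComodule (∑ i : ι, (TensorProduct.mk k g M (B i)) ∘ₗ (f i)) := by
  have hcm : ∀ m : M, (∑ i : ι, (TensorProduct.mk k g M (B i)) ∘ₗ (f i)) m
      = ∑ i : ι, B i ⊗ₜ[k] (f i m) := by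
    intro m
    rw [LinearMap.sum_apply]
    rfl
  apply LinearMap.ext; intro m
  simp only [LinearMap.comp_apply, hcm, map_sum, LinearMap.lTensor_tmul,
    TensorProduct.tmul_sum, map_sum, swap12_tmul]
  rw [Finset.sum_comm]
  refine Finset.sum_congr rfl fun i _ => Finset.sum_congr rfl fun j _ => ?_
  have := congrArg (fun (F : Module.End k M) => F m) (hc j i)
  simp only [Module.End.mul_apply] at this
  rw [show f j (f i m) = f i (f j m) from this]

lemma isLieComodule_coactOf {ι : Type} [Fintype ι] (B : Module.Basis ι k g)
    (ρ : Module.Dual k g →ₗ[k] Module.End k M)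
    (hc : ∀ θ η : Module.Dual k g, Commute (ρ θ) (ρ η)) :
    IsLieComodule (coactOf B ρ) :=
  isLieComodule_sum B (fun i => ρ (B.coord i)) fun _ _ => hc _ _

/-- The operators of a Lie comodule commute. -/
lemma rho_commute (cm : M →ₗ[k] g ⊗[k] M) (h : IsLieComodule cm)
    (θ η : Module.Dual k g) : Commute (rho cm θ) (rho cm η) := by
  have key : ∀ t : g ⊗[k] (g ⊗[k] M),
      ctr η (ctr θ (swap12 k g M t)) = ctr θ (ctr η t) := by
    intro t
    induction t using TensorProduct.induction_on with
    | zero => simp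
    | tmul x t' =>
        induction t' using TensorProduct.induction_on with
        | zero => simp
        | tmul y m =>
            rw [swap12_tmul]
            simp only [ctr_tmul, map_smul]
            rw [smul_comm]
        | add a b ha hb => simp only [TensorProduct.tmul_add, map_add, ha, hb]
    | add a b ha hb => simp only [map_add, ha, hb]
  have key2 : ∀ (ξ : Module.Dual k g) (t : g ⊗[k] M),
      ctr ξ (LinearMap.lTensor g cm t) = cm (ctr ξ t) := by
    intro ξ t
    induction t using TensorProduct.induction_on with
    | zero => simp
    | tmul x m => simp
    | add a b ha hb => simp only [map_add, ha, hb]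
  ext m
  have h1 := congrArg (fun f : M →ₗ[k] g ⊗[k] (g ⊗[k] M) =>
    ctr η (ctr θ (f m))) h
  simp only [LinearMap.comp_apply] at h1
  calc rho cm θ (rho cm η m) = ctr θ (ctr η (LinearMap.lTensor g cm (cm m))) := by
        simp [key2]
    _ = ctr η (ctr θ (swap12 k g M (LinearMap.lTensor g cm (cm m)))) := (key _).symm
    _ = ctr η (ctr θ (LinearMap.lTensor g cm (cm m))) := h1
    _ = rho cm η (rho cm θ m) := by simp [key2]

end Aux

theorem lie_comodules_are_symmetric_algebra_modules
    {k : Type} [Field k] [CharZero k]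
    {g : Type} [LieRing g] [LieAlgebra k g]
    {ι : Type} [Fintype ι] [DecidableEq ι] (B : Module.Basis ι k g)
    (M : Type) [AddCommGroup M] [Module k M] :
    -- comodule structures on M over g correspond bijectively to S(g*)-module
    -- structures on M, i.e. to families of commuting operators depending linearly on g*
    (∃ e : {cm : M →ₗ[k] g ⊗[k] M // IsLieComodule cm} ≃
           {ρ : Module.Dual k g →ₗ[k] Module.End k M //
              ∀ θ η : Module.Dual k g, Commute (ρ θ) (ρ η)},
      ∀ (c : {cm : M →ₗ[k] g ⊗[k] M // IsLieComodule cm}) (m : M),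
        (c : M →ₗ[k] g ⊗[k] M) m = ∑ i : ι, B i ⊗ₜ[k] (((e c).1 (B.coord i)) m)) ∧
    -- and the Koszul map `m ↦ Σᵢ Xᵢ ⊗ m·θⁱ` is a comodule structure on `S(g*)`
    IsLieComodule
      (∑ i : ι, (TensorProduct.mk k g (MvPolynomial ι k) (B i)) ∘ₗ
        (LinearMap.mulRight k (MvPolynomial.X i : MvPolynomial ι k))) := by
  constructor
  · refine ⟨{ toFun := fun c => ⟨rho c.1, rho_commute c.1 c.2⟩
              invFun := fun r => ⟨coactOf B r.1, isLieComodule_coactOf B r.1 r.2⟩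
              left_inv := ?_
              right_inv := ?_ }, ?_⟩
    · rintro ⟨cm, h⟩
      apply Subtype.ext
      apply LinearMap.ext; intro m
      simp only [coactOf_apply, rho_apply]
      exact expand_tensor B (cm m)
    · rintro ⟨ρ, h⟩
      apply Subtype.ext
      apply LinearMap.ext; intro θ
      apply LinearMap.ext; intro m
      simp only [rho_apply, coactOf_apply, map_sum, ctr_tmul]
      rw [← B.sum_dual_apply_smul_coord θ, map_sum, LinearMap.sum_apply]
      simp
    · rintro ⟨cm, h⟩ m
      exact (expand_tensor B (cm m)).symm
  · apply isLieComodule_sum B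
      (fun i => LinearMap.mulRight k (MvPolynomial.X i : MvPolynomial ι k))
    intro i j
    apply LinearMap.ext; intro p
    simp only [Module.End.mul_apply, LinearMap.mulRight_apply]
    ring

end
end

section
/- Consider sl2 over ℂ with basis X, Y, Z and brackets [Y,X] = X, [Z,X] = Y, [Z,Y] = Z, decomposed as g1 ⋈ g2 with g1 = span{X,Y}, g2 = span{Z}. Let M = S(sl2*) with the coadjoint action and the Koszul coaction (an SAYD module over sl2), and let ∇_{g1}: M → g1 ⊗ M, m ↦ X ⊗ mθ^X + Y ⊗ mθ^Y be the projection of the Koszul coaction to g1. Then ∇_{g1} is a g1-comodule structure on M, but the AYD compatibility over g1 fails: for example ∇_{g1}(m ◁ X) ≠ [X,X] ⊗ mθ^X + [Y,X] ⊗ mθ^Y + X ⊗ (mθ^X) ◁ X + Y ⊗ (mθ^Y) ◁ X, the discrepancy being the term −Y ⊗ mθ^Z. -/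
/-!
STATEMENT 7: For `sl₂ = ⟨X, Y, Z⟩` with `[Y,X] = X`, `[Z,X] = Y`, `[Z,Y] = Z`,
decomposed as `g₁ ⋈ g₂` with `g₁ = span{X,Y}`, `g₂ = span{Z}`, and
`M = S(sl₂*)` with the coadjoint action `m ◁ W = -L_W(m)` and the Koszul coaction,
the projection `∇_{g₁} : m ↦ X ⊗ mθ^X + Y ⊗ mθ^Y` of the Koszul coaction is a
`g₁`-comodule structure on `M`, but the AYD compatibility over `g₁` fails: the naive
AYD right-hand side differs from `∇_{g₁}(m ◁ X)` by the term `-Y ⊗ mθ^Z`, which is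
nonzero (e.g. for `m = 1`).
-/

open TensorProduct LinearMap

noncomputable section

variable {g : Type} [LieRing g] [LieAlgebra ℂ g]

/-- The coadjoint action of `W ∈ g` on `S(g*)`, extended as a derivation. -/
def coadDer (B : Module.Basis (Fin 3) ℂ g) (W : g) :
    Derivation ℂ (MvPolynomial (Fin 3) ℂ) (MvPolynomial (Fin 3) ℂ) :=
  MvPolynomial.mkDerivation ℂ
    (fun i => ∑ j : Fin 3, (-(B.repr ⁅W, B j⁆ i)) • (MvPolynomial.X j : MvPolynomial (Fin 3) ℂ))

/-- The action `m ◁ W = -L_W(m)` (`sl₂` is unimodular, so `δ = 0`). -/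
def sl2Act (B : Module.Basis (Fin 3) ℂ g) (W : g) :
    MvPolynomial (Fin 3) ℂ →ₗ[ℂ] MvPolynomial (Fin 3) ℂ :=
  -(coadDer B W).toLinearMap

/-- The projection of the Koszul coaction onto `g₁ = span{X, Y}`:
`m ↦ X ⊗ mθ^X + Y ⊗ mθ^Y`.  (We keep its values in `g ⊗ M`.) -/
def projCoact (B : Module.Basis (Fin 3) ℂ g) :
    MvPolynomial (Fin 3) ℂ →ₗ[ℂ] g ⊗[ℂ] MvPolynomial (Fin 3) ℂ :=
  (TensorProduct.mk ℂ g _ (B 0)) ∘ₗ (LinearMap.mulRight ℂ (MvPolynomial.X 0))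
    + (TensorProduct.mk ℂ g _ (B 1)) ∘ₗ (LinearMap.mulRight ℂ (MvPolynomial.X 1))

lemma swap12_tmul_s7 (k g M : Type) [Field k] [AddCommGroup g] [Module k g]
    [AddCommGroup M] [Module k M] (a b : g) (m : M) :
    swap12 k g M (a ⊗ₜ[k] (b ⊗ₜ[k] m)) = b ⊗ₜ[k] (a ⊗ₜ[k] m) := by
  simp [swap12]

lemma projCoact_apply (B : Module.Basis (Fin 3) ℂ g) (m : MvPolynomial (Fin 3) ℂ) :
    projCoact B m = B 0 ⊗ₜ[ℂ] (m * MvPolynomial.X 0) + B 1 ⊗ₜ[ℂ] (m * MvPolynomial.X 1) := by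
  simp [projCoact, TensorProduct.mk_apply]

lemma sl2Act_mul (B : Module.Basis (Fin 3) ℂ g) (W : g) (m n : MvPolynomial (Fin 3) ℂ) :
    sl2Act B W (m * n) = sl2Act B W m * n + m * sl2Act B W n := by
  simp [sl2Act, Derivation.leibniz]
  ring

lemma sl2Act_X (B : Module.Basis (Fin 3) ℂ g) (W : g) (i : Fin 3) :
    sl2Act B W (MvPolynomial.X i) =
      ∑ j : Fin 3, (B.repr ⁅W, B j⁆ i) • (MvPolynomial.X j : MvPolynomial (Fin 3) ℂ) := by
  simp [sl2Act, coadDer, MvPolynomial.mkDerivation_X]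

lemma sl2Act_one (B : Module.Basis (Fin 3) ℂ g) (W : g) : sl2Act B W 1 = 0 := by
  simp [sl2Act]

theorem sl2_projected_coaction_not_AYD
    (B : Module.Basis (Fin 3) ℂ g)
    -- sl₂ relations: X = B 0, Y = B 1, Z = B 2
    (hYX : ⁅B 1, B 0⁆ = B 0) (hZX : ⁅B 2, B 0⁆ = B 1) (hZY : ⁅B 2, B 1⁆ = B 2) :
    -- ∇_{g₁} is a comodule structure:
    IsLieComodule (projCoact B) ∧
    -- the AYD compatibility over g₁ fails, with discrepancy `-Y ⊗ mθ^Z`: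
    (∀ m : MvPolynomial (Fin 3) ℂ,
      ⁅B 0, B 0⁆ ⊗ₜ[ℂ] (m * MvPolynomial.X 0) + ⁅B 1, B 0⁆ ⊗ₜ[ℂ] (m * MvPolynomial.X 1)
        + (B 0) ⊗ₜ[ℂ] (sl2Act B (B 0) (m * MvPolynomial.X 0))
        + (B 1) ⊗ₜ[ℂ] (sl2Act B (B 0) (m * MvPolynomial.X 1))
      = projCoact B (sl2Act B (B 0) m) - (B 1) ⊗ₜ[ℂ] (m * MvPolynomial.X 2)) ∧
    -- in particular, for `m = 1`, `∇_{g₁}(m ◁ X)` differs from the naive AYD RHS: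
    (projCoact B (sl2Act B (B 0) 1) ≠
      ⁅B 0, B 0⁆ ⊗ₜ[ℂ] ((1 : MvPolynomial (Fin 3) ℂ) * MvPolynomial.X 0)
        + ⁅B 1, B 0⁆ ⊗ₜ[ℂ] ((1 : MvPolynomial (Fin 3) ℂ) * MvPolynomial.X 1)
        + (B 0) ⊗ₜ[ℂ] (sl2Act B (B 0) ((1 : MvPolynomial (Fin 3) ℂ) * MvPolynomial.X 0))
        + (B 1) ⊗ₜ[ℂ] (sl2Act B (B 0) ((1 : MvPolynomial (Fin 3) ℂ) * MvPolynomial.X 1))) := by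

  have hXX : ⁅B 0, B 0⁆ = 0 := lie_self _
  have hXY : ⁅B 0, B 1⁆ = -B 0 := by rw [← lie_skew, hYX]
  have hXZ : ⁅B 0, B 2⁆ = -B 1 := by rw [← lie_skew, hZX]
  have hL0 : sl2Act B (B 0) (MvPolynomial.X 0) = -MvPolynomial.X 1 := by
    rw [sl2Act_X]
    simp [Fin.sum_univ_three, hXX, hXY, hXZ]
  have hL1 : sl2Act B (B 0) (MvPolynomial.X 1) = -MvPolynomial.X 2 := by
    rw [sl2Act_X]
    simp [Fin.sum_univ_three, hXX, hXY, hXZ]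
  refine ⟨?_, ?_, ?_⟩
  · apply LinearMap.ext
    intro m
    simp only [LinearMap.comp_apply, projCoact_apply, map_add, LinearMap.lTensor_tmul,
      tmul_add, swap12_tmul_s7]
    rw [mul_right_comm m (MvPolynomial.X 0) (MvPolynomial.X 1)]
    abel
  · intro m
    rw [sl2Act_mul, sl2Act_mul, hL0, hL1, projCoact_apply, hXX, hYX]
    simp only [mul_neg, tmul_add, tmul_neg, zero_tmul]
    abel
  · rw [sl2Act_one, map_zero, sl2Act_mul, sl2Act_mul, sl2Act_one, hL0, hL1, hXX, hYX]
    simp only [one_mul, zero_mul, zero_add, tmul_neg, zero_tmul]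
    intro h
    have h2 := congrArg (fun t => (TensorProduct.lid ℂ (MvPolynomial (Fin 3) ℂ))
      ((TensorProduct.map (B.coord 1)
        (LinearMap.id : MvPolynomial (Fin 3) ℂ →ₗ[ℂ] MvPolynomial (Fin 3) ℂ)) t)) h
    simp [TensorProduct.map_tmul, Module.Basis.coord_apply] at h2


end
end
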